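/- Let S be a Noetherian R-algebra, let F and G be finitely generated S-modules that are torsion-free as R-modules, and let φ : F → G be an S-linear map such that φ ⊗_R K : F ⊗_R K → G ⊗_R K is surjective. Then there exists an integer m ≥ 0 such that π^m G ⊆ φ(F); moreover, setting I := φ⁻¹(π^m G), one has π^m F ⊆ I ⊆ F, multiplication by π^m is an injective map from G onto π^m G, and the composite of φ|_I : I → π^m G with the inverse of this multiplication map is a surjective S-linear map I → G. -/

import Mathlib

open scoped TensorProduct

/-- Let `R` be a DVR with uniformiser `π` and fraction field `K`, `S` a Noetherian
`R`-algebra, `F`, `G` finitely generated `S`-modules which are torsion-free over `R`,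
and `φ : F → G` an `S`-linear map with `φ ⊗_R K` surjective.  Then there is an `m ≥ 0`
such that `π^m G ⊆ φ(F)`; moreover, with `I := φ⁻¹(π^m G)`, one has `π^m F ⊆ I ⊆ F`,
multiplication by `π^m` is injective on `G`, and composing `φ|_I : I → π^m G` with the
inverse of this multiplication map gives a surjection `I → G` (that is, every `y : G`
is of the form `y = (π^m)⁻¹ φ(x)` for some `x ∈ I`, i.e. `φ x = π^m • y`). -/
theorem constructionA
    (R : Type*) [CommRing R] [IsDomain R] [IsDiscreteValuationRing R]
    (π : R) (hπ : Irreducible π)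
    (K : Type*) [Field K] [Algebra R K] [IsFractionRing R K]
    (S : Type*) [CommRing S] [Algebra R S] [IsNoetherianRing S]
    (F G : Type*)
    [AddCommGroup F] [Module R F] [Module S F] [IsScalarTower R S F]
    [AddCommGroup G] [Module R G] [Module S G] [IsScalarTower R S G]
    [Module.Finite S F] [Module.Finite S G]
    [NoZeroSMulDivisors R F] [NoZeroSMulDivisors R G]
    (φ : F →ₗ[S] G)
    (hsurj : Function.Surjective (LinearMap.baseChange K (LinearMap.restrictScalars R φ))) :
    ∃ m : ℕ,
      LinearMap.range (algebraMap R S (π ^ m) • (LinearMap.id : G →ₗ[S] G)) ≤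
          LinearMap.range φ ∧
      (∀ x : F, algebraMap R S (π ^ m) • x ∈
        Submodule.comap φ
          (LinearMap.range (algebraMap R S (π ^ m) • (LinearMap.id : G →ₗ[S] G)))) ∧
      Function.Injective
        (algebraMap R S (π ^ m) • (LinearMap.id : G →ₗ[S] G)) ∧
      (∀ y : G, ∃ x ∈ Submodule.comap φ
          (LinearMap.range (algebraMap R S (π ^ m) • (LinearMap.id : G →ₗ[S] G))),
        φ x = algebraMap R S (π ^ m) • y) := by
  classical
  -- localized module structures on `K ⊗ F` and `K ⊗ G`
  haveI hF : IsLocalizedModule (nonZeroDivisors R) (TensorProduct.mk R K F 1) :=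
    (isLocalizedModule_iff_isBaseChange (nonZeroDivisors R) K _).mpr
      (TensorProduct.isBaseChange R F K)
  haveI hG : IsLocalizedModule (nonZeroDivisors R) (TensorProduct.mk R K G 1) :=
    (isLocalizedModule_iff_isBaseChange (nonZeroDivisors R) K _).mpr
      (TensorProduct.isBaseChange R G K)
  -- Step 1: every `y : G` has some power of π times it in the range of φ
  have step1 : ∀ y : G, ∃ k : ℕ, (π ^ k) • y ∈ LinearMap.range φ := by
    intro y
    obtain ⟨z, hz⟩ := hsurj ((1 : K) ⊗ₜ y)
    obtain ⟨⟨x, s⟩, hxs⟩ := IsLocalizedModule.surj (nonZeroDivisors R) (TensorProduct.mk R K F 1) z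
    simp only [TensorProduct.mk_apply] at hxs
    have h2 : (1 : K) ⊗ₜ[R] ((s : R) • y) = (1 : K) ⊗ₜ[R] (φ x) := by
      have := congrArg (LinearMap.baseChange K (LinearMap.restrictScalars R φ)) hxs
      rw [Submonoid.smul_def, LinearMap.map_smul_of_tower, hz] at this
      simpa [TensorProduct.tmul_smul] using this
    have h3 : (TensorProduct.mk R K G 1) ((s : R) • y - φ x) = 0 := by
      simp only [TensorProduct.mk_apply, TensorProduct.tmul_sub, h2, sub_self]
    obtain ⟨t, ht⟩ := (IsLocalizedModule.eq_zero_iff (nonZeroDivisors R)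
      (TensorProduct.mk R K G 1)).mp h3
    have ht' : (t : R) • ((s : R) • y - φ x) = 0 := ht
    have hs : (s : R) • y = φ x := by
      have htne : (t : R) ≠ 0 := nonZeroDivisors.coe_ne_zero t
      have := (smul_eq_zero.mp ht').resolve_left htne
      exact sub_eq_zero.mp this
    obtain ⟨k, u, hu⟩ := IsDiscreteValuationRing.eq_unit_mul_pow_irreducible
      (nonZeroDivisors.coe_ne_zero s) hπ
    refine ⟨k, ?_⟩
    have : (π ^ k) • y = ((u⁻¹ : Rˣ) : R) • ((s : R) • y) := by
      rw [hu, smul_smul, ← mul_assoc, Units.inv_mul, one_mul]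
    rw [this, hs]
    have : ((u⁻¹ : Rˣ) : R) • φ x = φ (((u⁻¹ : Rˣ) : R) • x) := by
      rw [← algebraMap_smul S ((u⁻¹ : Rˣ) : R) x, map_smul, algebraMap_smul]
    rw [this]
    exact ⟨_, rfl⟩
  -- Step 2: uniform power using finite generation of G over S
  obtain ⟨n, v, hv⟩ := Module.Finite.exists_fin (R := S) (M := G)
  choose k hk using fun i => step1 (v i)
  set m : ℕ := (Finset.univ.sup k) with hm
  have key : ∀ y : G, (π ^ m) • y ∈ LinearMap.range φ := by
    have hT : ∀ y ∈ Submodule.span S (Set.range v),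
        (π ^ m) • y ∈ LinearMap.range φ := by
      intro y hy
      refine Submodule.span_induction ?_ ?_ ?_ ?_ hy
      · rintro _ ⟨i, rfl⟩
        have hle : k i ≤ m := Finset.le_sup (Finset.mem_univ i)
        have : (π ^ m) • v i = (π ^ (m - k i)) • ((π ^ (k i)) • v i) := by
          rw [smul_smul, ← pow_add, Nat.sub_add_cancel hle]
        rw [this]
        obtain ⟨x, hx⟩ := hk i
        rw [← hx]
        exact ⟨algebraMap R S (π ^ (m - k i)) • x, by
          rw [map_smul, algebraMap_smul]⟩
      · simp
      · intro a b _ _ ha hb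
        rw [smul_add]; exact Submodule.add_mem _ ha hb
      · intro s a _ ha
        rw [smul_comm]
        exact Submodule.smul_mem _ s ha
    intro y
    exact hT y (hv ▸ Submodule.mem_top)
  refine ⟨m, ?_, ?_, ?_, ?_⟩
  · rintro _ ⟨y, rfl⟩
    obtain ⟨x, hx⟩ := key y
    exact ⟨x, by rw [LinearMap.smul_apply, LinearMap.id_apply, algebraMap_smul, hx]⟩
  · intro x
    refine ⟨φ x, ?_⟩
    simp [map_smul]
  · intro a b hab
    simp only [LinearMap.smul_apply, LinearMap.id_apply, algebraMap_smul] at hab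
    have hne : (π ^ m : R) ≠ 0 := pow_ne_zero _ hπ.ne_zero
    exact smul_right_injective G hne hab
  · intro y
    have hy := key y
    rw [← algebraMap_smul S (π ^ m) y] at hy
    obtain ⟨x, hx⟩ := hy
    refine ⟨x, ⟨y, ?_⟩, hx⟩
    simp [hx]
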